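/- Let k be a natural number. Suppose a₀,…,a_k are rational numbers such that for every rational δ and all rationals u₀,…,u_k (extended by u_t = 0 for t < 0), one has (1/2)·(4^k·δ² − Σ_{i=0}^{k} C(2k+1, k−i) · 2^{k−i} · u_i) = Σ_{m=0}^{k} a_m · b_m, where b_m := (1/2)·(δ² − Σ_{i=0}^{m} C(2m+1, m−i) · Σ_{j=0}^{k−m} C(k−m, j) · u_{i−j}). Then a_m = C(2k+1, k−m) for every 0 ≤ m ≤ k. -/

import Mathlib

open Finset

/-- Trinomial revision, in the form needed. -/
lemma veronese_tri (k s m : ℕ) (hsm : s ≤ m) (hmk : m ≤ k) :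
    Nat.choose (2*k+1) (k-m) * Nat.choose (k+m+1) (m-s)
      = Nat.choose (2*k+1) (k-s) * Nat.choose (k-s) (m-s) := by
  have e1 : k - m = 2*k+1 - (k+m+1) := by omega
  have e2 : m - s = (k+m+1) - (k+s+1) := by omega
  have e3 : k - s = 2*k+1 - (k+s+1) := by omega
  rw [e1, e2, Nat.choose_symm (by omega), Nat.choose_symm (by omega),
    Nat.choose_mul (n := 2*k+1) (by omega : k+s+1 ≤ k+m+1)]
  have h4 := Nat.choose_symm (show k+s+1 ≤ 2*k+1 by omega)
  rw [← h4, ← e3]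

/-- Collapsed inner sum, ℕ version (Vandermonde). -/
lemma veronese_natcollapse (k m s : ℕ) (hmk : m ≤ k) (hsm : s ≤ m) :
    ∑ j ∈ range (k-m+1),
        (if j ≤ m - s then Nat.choose (2*m+1) (m-s-j) * Nat.choose (k-m) j else 0)
      = Nat.choose (k+m+1) (m-s) := by
  have ekm : k+m+1 = (k-m) + (2*m+1) := by omega
  rw [ekm, Nat.add_choose_eq, Finset.Nat.sum_antidiagonal_eq_sum_range_succ_mk]
  have h1 : ∑ j ∈ range (k-m+1),
      (if j ≤ m - s then Nat.choose (2*m+1) (m-s-j) * Nat.choose (k-m) j else 0)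
      = ∑ j ∈ range (k-s+1),
      (if j ≤ m - s then Nat.choose (2*m+1) (m-s-j) * Nat.choose (k-m) j else 0) := by
    apply Finset.sum_subset
    · intro x hx; simp only [mem_range] at *; omega
    · intro x hx hnx
      simp only [mem_range] at hx hnx
      have hx2 : k - m < x := by omega
      split
      · rw [Nat.choose_eq_zero_of_lt hx2, mul_zero]
      · rfl
  rw [h1]
  have h2 : ∑ x ∈ range (m-s+1), Nat.choose (k-m) x * Nat.choose (2*m+1) (m-s-x)
      = ∑ x ∈ range (m-s+1),
      (if x ≤ m - s then Nat.choose (2*m+1) (m-s-x) * Nat.choose (k-m) x else 0) := by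
    apply Finset.sum_congr rfl
    intro x hx
    simp only [mem_range] at hx
    have : x ≤ m - s := by omega
    simp [this, mul_comm]
  rw [h2]
  symm
  apply Finset.sum_subset
  · intro x hx; simp only [mem_range] at *; omega
  · intro x hx hnx
    simp only [mem_range] at hx hnx
    have : ¬ (x ≤ m - s) := by omega
    simp [this]

/-- The double sum against the indicator of `s` collapses to a single binomial. -/
lemma veronese_collapse (k m s : ℕ) (hmk : m ≤ k) :
    ∑ i ∈ range (m+1), (Nat.choose (2*m+1) (m-i) : ℚ) *
        ∑ j ∈ range (k-m+1), (Nat.choose (k-m) j : ℚ) *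
          (if ((i:ℤ) - (j:ℤ) = (s:ℤ)) then (1:ℚ) else 0)
      = if s ≤ m then (Nat.choose (k+m+1) (m-s) : ℚ) else 0 := by
  have hcond : ∀ i j : ℕ, (((i:ℤ) - (j:ℤ) = (s:ℤ)) ↔ i = s + j) := by
    intro i j; omega
  simp only [hcond, mul_ite, mul_one, mul_zero, Finset.mul_sum]
  rw [Finset.sum_comm]
  have hinner : ∀ j ∈ range (k-m+1),
      (∑ i ∈ range (m+1), if i = s + j then
          (Nat.choose (2*m+1) (m-i) : ℚ) * (Nat.choose (k-m) j : ℚ) else 0)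
      = if s + j ≤ m then
          (Nat.choose (2*m+1) (m-(s+j)) : ℚ) * (Nat.choose (k-m) j : ℚ) else 0 := by
    intro j _
    rw [Finset.sum_ite_eq' (range (m+1)) (s+j)
      (fun i => (Nat.choose (2*m+1) (m-i) : ℚ) * (Nat.choose (k-m) j : ℚ))]
    simp [Nat.lt_succ_iff]
  rw [Finset.sum_congr rfl hinner]
  by_cases hsm : s ≤ m
  · simp only [hsm, if_true]
    have hnat := veronese_natcollapse k m s hmk hsm
    calc ∑ j ∈ range (k-m+1), (if s + j ≤ m then
          (Nat.choose (2*m+1) (m-(s+j)) : ℚ) * (Nat.choose (k-m) j : ℚ) else 0)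
        = ((∑ j ∈ range (k-m+1), if j ≤ m - s then
            Nat.choose (2*m+1) (m-s-j) * Nat.choose (k-m) j else 0 : ℕ) : ℚ) := by
          push_cast
          apply Finset.sum_congr rfl
          intro j _
          by_cases hc : s + j ≤ m
          · have hc' : j ≤ m - s := by omega
            have h2 : m - (s + j) = m - s - j := by omega
            simp only [hc, hc', if_true, h2]
          · have hc' : ¬ (j ≤ m - s) := by omega
            simp [hc, hc']
      _ = (Nat.choose (k+m+1) (m-s) : ℚ) := by rw [hnat]
  · have hz : ∀ j ∈ range (k-m+1), (if s + j ≤ m then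
        (Nat.choose (2*m+1) (m-(s+j)) : ℚ) * (Nat.choose (k-m) j : ℚ) else 0) = 0 := by
      intro j _
      have : ¬ (s + j ≤ m) := by omega
      simp [this]
    rw [Finset.sum_congr rfl hz]
    simp [hsm]

/-- The full-sum identity: the true coefficients satisfy each equation. -/
lemma veronese_sumid (k s : ℕ) (hs : s ≤ k) :
    ∑ m ∈ range (k+1), (Nat.choose (2*k+1) (k-m) : ℚ) *
        (if s ≤ m then (Nat.choose (k+m+1) (m-s) : ℚ) else 0)
      = (Nat.choose (2*k+1) (k-s) : ℚ) * 2 ^ (k-s) := by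
  have h1 : ∀ m ∈ range (k+1), (Nat.choose (2*k+1) (k-m) : ℚ) *
      (if s ≤ m then (Nat.choose (k+m+1) (m-s) : ℚ) else 0)
      = if m ∈ Finset.Ico s (k+1) then
          (Nat.choose (2*k+1) (k-s) : ℚ) * (Nat.choose (k-s) (m-s) : ℚ) else 0 := by
    intro m hm
    simp only [mem_range, Nat.lt_succ_iff] at hm
    simp only [Finset.mem_Ico, Nat.lt_succ_iff]
    by_cases hsm : s ≤ m
    · simp only [hsm, hm, and_self, if_true,
        ← Nat.cast_mul, veronese_tri k s m hsm hm]
    · simp [hsm]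
  rw [Finset.sum_congr rfl h1, Finset.sum_ite_mem]
  have hint : range (k+1) ∩ Finset.Ico s (k+1) = Finset.Ico s (k+1) := by
    apply Finset.inter_eq_right.mpr
    intro x hx
    simp only [Finset.mem_Ico] at hx
    simp only [mem_range]
    exact hx.2
  rw [hint, Finset.sum_Ico_eq_sum_range]
  have hrange : k + 1 - s = k - s + 1 := by omega
  rw [hrange]
  have h2 : ∀ i ∈ range (k-s+1),
      (Nat.choose (2*k+1) (k-s) : ℚ) * (Nat.choose (k-s) (s+i-s) : ℚ)
      = (Nat.choose (2*k+1) (k-s) : ℚ) * (Nat.choose (k-s) i : ℚ) := by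
    intro i _
    have : s + i - s = i := by omega
    rw [this]
  rw [Finset.sum_congr rfl h2, ← Finset.mul_sum]
  congr 1
  rw [← Nat.cast_sum]
  norm_cast
  exact Nat.sum_range_choose (k-s)

theorem veronese_double_point_coeff_unique (k : ℕ) (a : ℕ → ℚ)
    (ha : ∀ δ : ℚ, ∀ u : ℤ → ℚ, (∀ t : ℤ, t < 0 → u t = 0) →
      (1/2 : ℚ) * ((4 : ℚ) ^ k * δ ^ 2 -
          ∑ i ∈ Finset.range (k + 1),
            (Nat.choose (2 * k + 1) (k - i) : ℚ) * 2 ^ (k - i) * u i) =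
        ∑ m ∈ Finset.range (k + 1),
          a m *
            ((1/2 : ℚ) * (δ ^ 2 -
              ∑ i ∈ Finset.range (m + 1),
                (Nat.choose (2 * m + 1) (m - i) : ℚ) *
                  ∑ j ∈ Finset.range (k - m + 1),
                    (Nat.choose (k - m) j : ℚ) * u ((i : ℤ) - (j : ℤ))))) :
    ∀ m ≤ k, a m = (Nat.choose (2 * k + 1) (k - m) : ℚ) := by
  have E : ∀ s, s ≤ k → ∑ m ∈ range (k+1),
      a m * (if s ≤ m then (Nat.choose (k+m+1) (m-s) : ℚ) else 0)
      = (Nat.choose (2*k+1) (k-s) : ℚ) * 2 ^ (k-s) := by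
    intro s hs
    have h := ha 0 (fun t => if t = (s:ℤ) then (1:ℚ) else 0) (by
      intro t ht
      simp only [ite_eq_right_iff]
      intro h'
      omega)
    have hL : ∑ i ∈ range (k+1), (Nat.choose (2*k+1) (k-i) : ℚ) * 2^(k-i) *
        (if (i:ℤ) = (s:ℤ) then (1:ℚ) else 0)
        = (Nat.choose (2*k+1) (k-s):ℚ) * 2^(k-s) := by
      have hc : ∀ i : ℕ, (((i:ℤ) = (s:ℤ)) ↔ i = s) := by intro i; omega
      simp only [hc, mul_ite, mul_one, mul_zero]
      rw [Finset.sum_ite_eq' (range (k+1)) s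
        (fun i => (Nat.choose (2*k+1) (k-i) : ℚ) * 2^(k-i))]
      simp [Nat.lt_succ_iff, hs]
    have hR : ∀ m ∈ range (k+1),
        a m * ((1/2:ℚ) * ((0:ℚ)^2 - ∑ i ∈ range (m+1),
          (Nat.choose (2*m+1) (m-i):ℚ) *
          ∑ j ∈ range (k-m+1), (Nat.choose (k-m) j : ℚ) *
            (if (i:ℤ)-(j:ℤ) = (s:ℤ) then (1:ℚ) else 0)))
        = (-(1/2:ℚ)) *
            (a m * (if s ≤ m then (Nat.choose (k+m+1) (m-s):ℚ) else 0)) := by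
      intro m hm
      simp only [mem_range, Nat.lt_succ_iff] at hm
      rw [veronese_collapse k m s hm]
      ring
    rw [Finset.sum_congr rfl hR, hL, ← Finset.mul_sum] at h
    have h4 : (4:ℚ)^k * (0:ℚ)^2 = 0 := by ring
    rw [h4] at h
    linarith
  intro m0 hm0
  suffices H : ∀ n, ∀ s, s ≤ k → k - s = n → a s = (Nat.choose (2*k+1) (k-s):ℚ) by
    have := H (k - m0) m0 hm0 rfl
    convert this using 3
  intro n
  induction n using Nat.strong_induction_on with
  | _ n ih =>
    intro s hs hn
    have h0 : ∑ m ∈ range (k+1), (a m - (Nat.choose (2*k+1) (k-m):ℚ)) *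
        (if s ≤ m then (Nat.choose (k+m+1) (m-s):ℚ) else 0) = 0 := by
      have hsplit : ∀ m ∈ range (k+1),
          (a m - (Nat.choose (2*k+1) (k-m):ℚ)) *
            (if s ≤ m then (Nat.choose (k+m+1) (m-s):ℚ) else 0)
          = a m * (if s ≤ m then (Nat.choose (k+m+1) (m-s):ℚ) else 0)
            - (Nat.choose (2*k+1) (k-m):ℚ) *
              (if s ≤ m then (Nat.choose (k+m+1) (m-s):ℚ) else 0) := by
        intro m _; ring
      rw [Finset.sum_congr rfl hsplit, Finset.sum_sub_distrib, E s hs,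
        veronese_sumid k s hs, sub_self]
    rw [Finset.sum_eq_single_of_mem s (by simp [Nat.lt_succ_iff, hs])] at h0
    · simp only [le_refl, if_true, Nat.sub_self, Nat.choose_zero_right,
        Nat.cast_one, mul_one] at h0
      linarith
    · intro m hm hne
      simp only [mem_range, Nat.lt_succ_iff] at hm
      by_cases hlt : m < s
      · have : ¬ s ≤ m := by omega
        simp [this]
      · have hsm : s < m := by omega
        have hkm : k - m < n := by omega
        have : a m = (Nat.choose (2*k+1) (k-m):ℚ) := ih (k-m) hkm m hm rfl
        rw [this, sub_self, zero_mul]
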